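/- In a translation-covariant particle system on ℤ^d in which each labeled particle either fixates at some site or not, and at most one particle can fixate at any given site, the expected number of particles per site that fixate is at most 1. Consequently, if the initial particle density μ exceeds 1, then with positive probability some particle does not fixate. -/

import Mathlib

open MeasureTheory ProbabilityTheory
open scoped ENNReal

/-- **Density of fixating particles is at most 1.** In a translation-covariant particle
system on `ℤ^d`, with `A x j y` the event that particle `(x,j)` fixates at site `y`
(only existing particles can fixate, and at most one particle fixates at each site),
the expected number of particles per site that fixate is at most `1`. Consequently,
if the initial density exceeds `1`, then with positive probability some particle
does not fixate. -/
theorem density_of_fixating_particles_le_one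
    {d : ℕ} {Ω : Type*} [MeasurableSpace Ω] (P : Measure Ω) [IsProbabilityMeasure P]
    (T : (Fin d → ℤ) → Ω → Ω)
    (hT0 : T 0 = id)
    (hTadd : ∀ v w : Fin d → ℤ, T (v + w) = T v ∘ T w)
    (hTpres : ∀ v, MeasurePreserving (T v) P P)
    (η₀ : Ω → (Fin d → ℤ) → ℕ)
    (hmeasη : ∀ x, Measurable fun ω => η₀ ω x)
    (hηcov : ∀ (v x : Fin d → ℤ) (ω : Ω), η₀ (T v ω) x = η₀ ω (x + v))
    (A : (Fin d → ℤ) → ℕ → (Fin d → ℤ) → Set Ω)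
    (hmeasA : ∀ x j y, MeasurableSet (A x j y))
    (hAcov : ∀ (v x : Fin d → ℤ) (j : ℕ) (y : Fin d → ℤ) (ω : Ω),
      T v ω ∈ A x j y ↔ ω ∈ A (x + v) j (y + v))
    (hAexists : ∀ x j y, A x j y ⊆ {ω | j < η₀ ω x})
    (hAunique : ∀ y : Fin d → ℤ, ∀ x j x' j', (x, j) ≠ (x', j') → A x j y ∩ A x' j' y = ∅) :
    (∫⁻ ω, ∑' (j : ℕ) (y : Fin d → ℤ), (A 0 j y).indicator (fun _ => (1 : ℝ≥0∞)) ω ∂P ≤ 1) ∧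
      (1 < ∫⁻ ω, (η₀ ω 0 : ℝ≥0∞) ∂P →
        0 < P {ω | ∃ (x : Fin d → ℤ) (j : ℕ), j < η₀ ω x ∧ ∀ y, ω ∉ A x j y}) := by
  -- translation invariance of the probabilities of the events A
  have hP : ∀ (x : Fin d → ℤ) (j : ℕ) (y v : Fin d → ℤ),
      P (A (x + v) j (y + v)) = P (A x j y) := by
    intro x j y v
    have hset : T v ⁻¹' (A x j y) = A (x + v) j (y + v) := by
      ext ω
      simpa using hAcov v x j y ω
    calc P (A (x + v) j (y + v)) = P (T v ⁻¹' (A x j y)) := by rw [hset]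
      _ = P (A x j y) := (hTpres v).measure_preimage (hmeasA x j y).nullMeasurableSet
  -- the key mass-transport identity and bound
  have key : ∫⁻ ω, ∑' (j : ℕ) (y : Fin d → ℤ),
      (A 0 j y).indicator (fun _ => (1 : ℝ≥0∞)) ω ∂P ≤ 1 := by
    have hmeas_inner : ∀ j : ℕ, Measurable fun ω =>
        ∑' (y : Fin d → ℤ), (A 0 j y).indicator (fun _ => (1 : ℝ≥0∞)) ω := by
      intro j
      exact Measurable.ennreal_tsum fun y =>
        (measurable_const.indicator (hmeasA 0 j y))
    have h1 : ∫⁻ ω, ∑' (j : ℕ) (y : Fin d → ℤ),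
        (A 0 j y).indicator (fun _ => (1 : ℝ≥0∞)) ω ∂P
        = ∑' (j : ℕ) (y : Fin d → ℤ), P (A 0 j y) := by
      rw [lintegral_tsum (fun j => (hmeas_inner j).aemeasurable)]
      congr 1
      ext j
      rw [lintegral_tsum (fun y =>
        (measurable_const.indicator (hmeasA 0 j y)).aemeasurable)]
      congr 1
      ext y
      exact lintegral_indicator_one (hmeasA 0 j y)
    have h2 : ∀ j : ℕ, ∑' (y : Fin d → ℤ), P (A 0 j y)
        = ∑' (x : Fin d → ℤ), P (A x j 0) := by
      intro j
      have : ∀ y : Fin d → ℤ, P (A 0 j y) = P (A (-y) j 0) := by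
        intro y
        simpa using hP (-y) j 0 y
      rw [tsum_congr this]
      exact (Equiv.neg (Fin d → ℤ)).tsum_eq fun x => P (A x j 0)
    have h3 : ∑' (j : ℕ) (x : Fin d → ℤ), P (A x j 0)
        = ∑' (p : ℕ × (Fin d → ℤ)), P (A p.2 p.1 0) :=
      (ENNReal.tsum_prod (f := fun j x => P (A x j 0))).symm
    have h4 : ∑' (p : ℕ × (Fin d → ℤ)), P (A p.2 p.1 0)
        = P (⋃ p : ℕ × (Fin d → ℤ), A p.2 p.1 0) := by
      refine (measure_iUnion ?_ fun (p : ℕ × (Fin d → ℤ)) => hmeasA p.2 p.1 0).symm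
      intro p q hpq
      have : (p.2, p.1) ≠ (q.2, q.1) := by
        intro h
        exact hpq (Prod.ext (congrArg Prod.snd h) (congrArg Prod.fst h))
      have := hAunique 0 p.2 p.1 q.2 q.1 this
      exact Set.disjoint_iff_inter_eq_empty.mpr this
    calc ∫⁻ ω, ∑' (j : ℕ) (y : Fin d → ℤ),
        (A 0 j y).indicator (fun _ => (1 : ℝ≥0∞)) ω ∂P
        = ∑' (j : ℕ) (y : Fin d → ℤ), P (A 0 j y) := h1
      _ = ∑' (j : ℕ) (x : Fin d → ℤ), P (A x j 0) := tsum_congr h2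
      _ = P (⋃ p : ℕ × (Fin d → ℤ), A p.2 p.1 0) := by rw [h3, h4]
      _ ≤ 1 := prob_le_one
  refine ⟨key, ?_⟩
  intro hμ
  by_contra hpos
  have hS0 : P {ω | ∃ (x : Fin d → ℤ) (j : ℕ), j < η₀ ω x ∧ ∀ y, ω ∉ A x j y} = 0 :=
    le_antisymm (not_lt.mp hpos) (zero_le)
  have hae : ∀ᵐ ω ∂P, ω ∉ {ω | ∃ (x : Fin d → ℤ) (j : ℕ),
      j < η₀ ω x ∧ ∀ y, ω ∉ A x j y} := by
    rw [ae_iff]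
    simpa using hS0
  have hbound : ∀ᵐ ω ∂P, (η₀ ω 0 : ℝ≥0∞) ≤
      ∑' (j : ℕ) (y : Fin d → ℤ), (A 0 j y).indicator (fun _ => (1 : ℝ≥0∞)) ω := by
    filter_upwards [hae] with ω hω
    have hfix : ∀ j : ℕ, j < η₀ ω 0 → ∃ y, ω ∈ A 0 j y := by
      intro j hj
      by_contra h
      push_neg at h
      exact hω ⟨0, j, hj, h⟩
    calc (η₀ ω 0 : ℝ≥0∞)
        = ∑ j ∈ Finset.range (η₀ ω 0), (1 : ℝ≥0∞) := by simp
      _ ≤ ∑ j ∈ Finset.range (η₀ ω 0),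
          ∑' (y : Fin d → ℤ), (A 0 j y).indicator (fun _ => (1 : ℝ≥0∞)) ω := by
          refine Finset.sum_le_sum fun j hj => ?_
          obtain ⟨y, hy⟩ := hfix j (Finset.mem_range.mp hj)
          calc (1 : ℝ≥0∞) = (A 0 j y).indicator (fun _ => (1 : ℝ≥0∞)) ω := by
                rw [Set.indicator_of_mem hy]
            _ ≤ ∑' (y : Fin d → ℤ), (A 0 j y).indicator (fun _ => (1 : ℝ≥0∞)) ω :=
                ENNReal.le_tsum y
      _ ≤ ∑' (j : ℕ) (y : Fin d → ℤ), (A 0 j y).indicator (fun _ => (1 : ℝ≥0∞)) ω :=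
          ENNReal.sum_le_tsum _
  have : ∫⁻ ω, (η₀ ω 0 : ℝ≥0∞) ∂P ≤ 1 :=
    le_trans (lintegral_mono_ae hbound) key
  exact absurd (lt_of_lt_of_le hμ this) (lt_irrefl 1)
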